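/- arXiv:0903.4112 — 3 statements merged into one kernel-verified Lean document; each statement's English description precedes it below -/
import Mathlib

section
/- Let 𝒬 be an intersection compatible pseudo-prime system in an excellent local ring (R, m, k), and let P be a prime ideal of R. Then the pseudo-prime system 𝒬R_P := { QR_P : Q ∈ 𝒬 and Q ⊆ P } in the localization R_P is again intersection compatible. -/
open IsLocalRing TensorProduct

universe u

section Defs

variable (R : Type u) [CommRing R]

/-- The embedding dimension of a Noetherian local ring: `dim_k (m/m²)`. -/
noncomputable def embDim [IsLocalRing R] : ℕ :=
  Module.finrank (ResidueField R) (CotangentSpace R)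

/-- A Noetherian local ring is regular if its embedding dimension equals its Krull dimension. -/
def IsRegularLocal [IsLocalRing R] : Prop :=
  IsNoetherianRing R ∧ (embDim R : WithBot ℕ∞) = ringKrullDim R

/-- A (not necessarily local) commutative ring is regular if it is Noetherian and all of its
localizations at primes are regular local rings. -/
def IsRegularRing' : Prop :=
  IsNoetherianRing R ∧ ∀ (p : Ideal R) (_ : p.IsPrime), IsRegularLocal (Localization.AtPrime p)

/-- An algebra `A` over a field `k` is geometrically regular if `L ⊗ₖ A` is a regular ring for
every finite field extension `L` of `k`. -/
def IsGeomRegularAlgebra (k : Type u) (A : Type u) [Field k] [CommRing A] [Algebra k A] : Prop :=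
  ∀ (L : Type u) [Field L] [Algebra k L], Module.Finite k L → IsRegularRing' (L ⊗[k] A)

/-- A chain of primes is saturated if each step is a covering relation. -/
def IsSaturatedChain {α : Type u} [Preorder α] (c : LTSeries α) : Prop :=
  ∀ i : Fin c.length, c.toFun i.castSucc ⋖ c.toFun i.succ

/-- A ring is catenary if any two saturated chains of primes with the same endpoints have the
same length. -/
def IsCatenary : Prop :=
  ∀ c₁ c₂ : LTSeries (PrimeSpectrum R), c₁.head = c₂.head → c₁.last = c₂.last →
    IsSaturatedChain c₁ → IsSaturatedChain c₂ → c₁.length = c₂.length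

/-- A ring is universally catenary if every finite type algebra over it is catenary. -/
def IsUniversallyCatenary : Prop :=
  ∀ (S : Type u) [CommRing S] [Algebra R S], Algebra.FiniteType R S → IsCatenary S

/-- The residue field of a ring at a prime ideal. -/
abbrev residueFieldAt (q : Ideal R) [q.IsPrime] : Type u :=
  ResidueField (Localization.AtPrime q)

/-- A ring is a G-ring if, for every prime `p`, the formal fibers of `R_p` (the fibers of the
map from `R_p` to its `maximal-adic` completion, over the primes `q ⊆ p` of `R`) are
geometrically regular over the residue fields `κ(q)`. -/
def IsGRing : Prop :=
  ∀ (p : Ideal R) (_ : p.IsPrime) (q : Ideal R) (_ : q.IsPrime), q ≤ p →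
    letI Rp := Localization.AtPrime p
    letI Rphat := AdicCompletion (maximalIdeal Rp) Rp
    letI : Algebra R Rphat :=
      ((algebraMap Rp Rphat).comp (algebraMap R Rp)).toAlgebra
    letI : Algebra R (residueFieldAt R q) :=
      ((algebraMap (Localization.AtPrime q) (residueFieldAt R q)).comp
        (algebraMap R (Localization.AtPrime q))).toAlgebra
    IsGeomRegularAlgebra (residueFieldAt R q)
      (@TensorProduct R _ (residueFieldAt R q) Rphat _ _ Algebra.toModule Algebra.toModule)

/-- A ring is J-2 if the regular locus of every finite type algebra over it is open. -/
def IsJ2 : Prop :=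
  ∀ (S : Type u) [CommRing S] [Algebra R S], Algebra.FiniteType R S →
    IsOpen {p : PrimeSpectrum S | IsRegularLocal (Localization.AtPrime p.asIdeal)}

/-- A ring is excellent if it is Noetherian, universally catenary, a G-ring, and J-2. -/
def IsExcellentRing : Prop :=
  IsNoetherianRing R ∧ IsUniversallyCatenary R ∧ IsGRing R ∧ IsJ2 R

/-- A proper ideal of a local ring is equidimensional if all of its minimal primes have the same
coheight. -/
def IsEquidimensionalIdeal (Q : Ideal R) : Prop :=
  ∀ P ∈ Q.minimalPrimes, ringKrullDim (R ⧸ P) = ringKrullDim (R ⧸ Q)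

/-- A set of ideals of a local ring is a pseudo-prime system if each of its members is a proper
radical equidimensional ideal, and whenever some minimal prime of one member is contained in a
minimal prime of another, the first member is contained in the second. -/
def IsPseudoPrimeSystem (𝒬 : Set (Ideal R)) : Prop :=
  (∀ Q ∈ 𝒬, Q ≠ ⊤ ∧ Q.IsRadical ∧ IsEquidimensionalIdeal R Q) ∧
    ∀ Q₁ ∈ 𝒬, ∀ Q₂ ∈ 𝒬,
      (∃ P₁ ∈ Q₁.minimalPrimes, ∃ P₂ ∈ Q₂.minimalPrimes, P₁ ≤ P₂) → Q₁ ≤ Q₂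

/-- `e(R, 𝒬, d)`: the number of ideals in `𝒬` of coheight `d`. -/
noncomputable def sysCount (𝒬 : Set (Ideal R)) (d : ℕ) : ℕ :=
  {Q ∈ 𝒬 | ringKrullDim (R ⧸ Q) = (d : WithBot ℕ∞)}.ncard

/-- The set of all intersections of finite nonempty subcollections of `𝒬`. -/
def finiteIntersections (𝒬 : Set (Ideal R)) : Set (Ideal R) :=
  {I | ∃ α : Finset (Ideal R), α.Nonempty ∧ ↑α ⊆ 𝒬 ∧ I = α.inf id}

/-- A pseudo-prime system `𝒬` is intersection compatible if the set of intersections of finite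
nonempty subcollections of `𝒬` is closed under (finite) sums. -/
def IsIntersectionCompatible (𝒬 : Set (Ideal R)) : Prop :=
  ∀ I ∈ finiteIntersections R 𝒬, ∀ J ∈ finiteIntersections R 𝒬,
    I + J ∈ finiteIntersections R 𝒬

end Defs


section Aux

variable {R : Type u} [CommRing R] (S : Type u) [CommRing S] [Algebra R S]

lemma loc_map_inf (M : Submonoid R) [IsLocalization M S] (I J : Ideal R) :
    (I ⊓ J).map (algebraMap R S) = I.map (algebraMap R S) ⊓ J.map (algebraMap R S) := by
  refine le_antisymm (Ideal.map_inf_le _) ?_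
  intro z hz
  obtain ⟨⟨x, s⟩, rfl⟩ := IsLocalization.mk'_surjective M z
  rw [Ideal.mem_inf, IsLocalization.mk'_mem_map_algebraMap_iff M,
    IsLocalization.mk'_mem_map_algebraMap_iff M] at hz
  obtain ⟨⟨s₁, h₁m, h₁⟩, ⟨s₂, h₂m, h₂⟩⟩ := hz
  rw [IsLocalization.mk'_mem_map_algebraMap_iff M]
  refine ⟨s₁ * s₂, M.mul_mem h₁m h₂m, Ideal.mem_inf.2 ⟨?_, ?_⟩⟩
  · have : s₁ * s₂ * x = s₂ * (s₁ * x) := by ring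
    rw [this]; exact Ideal.mul_mem_left _ _ h₁
  · rw [mul_assoc]; exact Ideal.mul_mem_left _ _ h₂

lemma loc_map_finset_inf (M : Submonoid R) [IsLocalization M S] {ι : Type u} (α : Finset ι)
    (f : ι → Ideal R) :
    (α.inf f).map (algebraMap R S) = α.inf (fun i => (f i).map (algebraMap R S)) := by
  classical
  induction α using Finset.induction with
  | empty => simp [Ideal.map_top]
  | insert _ _ h ih =>
    rw [Finset.inf_insert, Finset.inf_insert, loc_map_inf S M, ih]

end Aux

/-- Intersection compatibility is preserved by localization at a prime of an excellent local
ring. -/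
theorem isIntersectionCompatible_map_localization (R : Type u) [CommRing R] [IsLocalRing R]
    (hexc : IsExcellentRing R) (𝒬 : Set (Ideal R)) (h𝒬 : IsPseudoPrimeSystem R 𝒬)
    (hcompat : IsIntersectionCompatible R 𝒬) (P : Ideal R) [P.IsPrime] :
    IsIntersectionCompatible (Localization.AtPrime P)
      ((fun Q : Ideal R => Q.map (algebraMap R (Localization.AtPrime P))) ''
        {Q ∈ 𝒬 | Q ≤ P}) := by
  classical
  set Rₚ := Localization.AtPrime P
  set φ : Ideal R → Ideal Rₚ := fun Q => Q.map (algebraMap R Rₚ) with hφ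
  -- every element of the localized finite intersections comes from a finset in R
  have key : ∀ I ∈ finiteIntersections Rₚ (φ '' {Q ∈ 𝒬 | Q ≤ P}),
      ∃ β : Finset (Ideal R), β.Nonempty ∧ ↑β ⊆ {Q ∈ 𝒬 | Q ≤ P} ∧ I = φ (β.inf id) := by
    rintro I ⟨α, hne, hsub, rfl⟩
    have hchoose : ∀ x : {x // x ∈ α}, ∃ Q, Q ∈ {Q ∈ 𝒬 | Q ≤ P} ∧ φ Q = x.1 := by
      rintro ⟨x, hx⟩
      obtain ⟨Q, hQ, hQx⟩ := hsub hx
      exact ⟨Q, hQ, hQx⟩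
    choose g hg1 hg2 using hchoose
    refine ⟨α.attach.image g, (Finset.attach_nonempty_iff.2 hne).image g, ?_, ?_⟩
    · intro Q hQ
      simp only [Finset.coe_image, Set.mem_image] at hQ
      obtain ⟨x, _, rfl⟩ := hQ
      exact hg1 x
    · simp only [hφ]
      rw [loc_map_finset_inf Rₚ P.primeCompl]
      rw [Finset.inf_image]
      have h' : α.attach.inf ((fun i => Ideal.map (algebraMap R Rₚ) (id i)) ∘ g)
          = α.attach.inf (fun x => (x.1 : Ideal Rₚ)) :=
        Finset.inf_congr rfl (fun x _ => hg2 x)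
      rw [h']
      exact (Finset.inf_attach α id).symm
  rintro I hI J hJ
  obtain ⟨β₁, hne₁, hsub₁, rfl⟩ := key I hI
  obtain ⟨β₂, hne₂, hsub₂, rfl⟩ := key J hJ
  -- the sum upstairs
  have h₁ : β₁.inf id ∈ finiteIntersections R 𝒬 :=
    ⟨β₁, hne₁, fun Q hQ => (hsub₁ hQ).1, rfl⟩
  have h₂ : β₂.inf id ∈ finiteIntersections R 𝒬 :=
    ⟨β₂, hne₂, fun Q hQ => (hsub₂ hQ).1, rfl⟩
  obtain ⟨γ, hneγ, hsubγ, hγ⟩ := hcompat _ h₁ _ h₂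
  -- the sum upstairs is contained in P
  have hsumP : β₁.inf id + β₂.inf id ≤ P := by
    obtain ⟨Q₁, hQ₁⟩ := hne₁
    obtain ⟨Q₂, hQ₂⟩ := hne₂
    exact sup_le (le_trans (Finset.inf_le hQ₁) (hsub₁ hQ₁).2)
      (le_trans (Finset.inf_le hQ₂) (hsub₂ hQ₂).2)
  have hγP : γ.inf id ≤ P := hγ ▸ hsumP
  -- some member of γ is contained in P
  obtain ⟨Q₀, hQ₀γ, hQ₀P⟩ := (Ideal.IsPrime.inf_le' ‹P.IsPrime›).1 hγP
  set γ' : Finset (Ideal R) := γ.filter (fun Q => Q ≤ P) with hγ'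
  have hQ₀γ' : Q₀ ∈ γ' := Finset.mem_filter.2 ⟨hQ₀γ, hQ₀P⟩
  -- ideals not contained in P localize to ⊤
  have htop : ∀ Q ∈ γ, ¬ Q ≤ P → φ Q = ⊤ := by
    intro Q _ hQP
    obtain ⟨q, hqQ, hqP⟩ := SetLike.not_le_iff_exists.1 hQP
    exact Ideal.eq_top_of_isUnit_mem _ (Ideal.mem_map_of_mem _ hqQ)
      (IsLocalization.map_units Rₚ (⟨q, hqP⟩ : P.primeCompl))
  -- the localized inf over γ equals that over γ'
  have hinf : γ.inf (fun Q => φ Q) = γ'.inf (fun Q => φ Q) := by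
    refine le_antisymm (Finset.inf_mono (Finset.filter_subset _ _)) ?_
    refine Finset.le_inf fun Q hQ => ?_
    by_cases hQP : Q ≤ P
    · exact Finset.inf_le (Finset.mem_filter.2 ⟨hQ, hQP⟩)
    · rw [htop Q hQ hQP]; exact le_top
  refine ⟨γ'.image φ, ⟨φ Q₀, Finset.mem_image_of_mem φ hQ₀γ'⟩, ?_, ?_⟩
  · intro x hx
    simp only [Finset.coe_image, Set.mem_image] at hx
    obtain ⟨Q, hQ, rfl⟩ := hx
    have hQγ' := Finset.mem_filter.1 hQ
    exact ⟨Q, ⟨hsubγ hQγ'.1, hQγ'.2⟩, rfl⟩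
  · have : φ (β₁.inf id) + φ (β₂.inf id) = φ (β₁.inf id + β₂.inf id) := by
      rw [hφ]; exact (Ideal.map_sup _ _ _).symm
    rw [this, hγ]
    simp only [hφ]
    rw [loc_map_finset_inf Rₚ P.primeCompl]
    have e1 : (γ.inf fun i => Ideal.map (algebraMap R Rₚ) (id i)) = γ.inf fun Q => φ Q :=
      Finset.inf_congr rfl (fun x _ => rfl)
    have e2 : (Finset.image (fun Q => Ideal.map (algebraMap R Rₚ) Q) γ').inf id
        = γ'.inf fun Q => φ Q := by
      rw [Finset.inf_image]; exact Finset.inf_congr rfl (fun x _ => rfl)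
    rw [e1, e2, hinf]
end

section
/- Let 𝒬 be an intersection compatible pseudo-prime system in an excellent local ring (R, m, k), and let I be any ideal of R. Then the pseudo-prime system 𝒬/I := { Q/I : Q ∈ 𝒬 and I ⊆ Q } in R/I is again intersection compatible. -/
open IsLocalRing TensorProduct

universe u

section Aux

variable {R : Type u} [CommRing R] (I : Ideal R)

lemma comap_finset_inf_aux {ι : Type u} [DecidableEq ι] (α : Finset ι)
    (g : ι → Ideal (R ⧸ I)) :
    Ideal.comap (Ideal.Quotient.mk I) (α.inf g) =
      α.inf (fun i => Ideal.comap (Ideal.Quotient.mk I) (g i)) := by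
  classical
  induction α using Finset.induction_on with
  | empty => simp
  | insert _ _ _ ih => simp [Finset.inf_insert, Ideal.comap_inf, ih]

lemma comap_map_mk_aux {Q : Ideal R} (h : I ≤ Q) :
    Ideal.comap (Ideal.Quotient.mk I) (Ideal.map (Ideal.Quotient.mk I) Q) = Q := by
  rw [Ideal.comap_map_of_surjective _ Ideal.Quotient.mk_surjective,
    ← RingHom.ker_eq_comap_bot, Ideal.mk_ker, sup_eq_left.mpr h]

lemma finiteIntersections_comap_aux (𝒬 : Set (Ideal R)) {J : Ideal (R ⧸ I)}
    (hJ : J ∈ finiteIntersections (R ⧸ I)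
      ((fun Q : Ideal R => Q.map (Ideal.Quotient.mk I)) '' {Q ∈ 𝒬 | I ≤ Q})) :
    Ideal.comap (Ideal.Quotient.mk I) J ∈ finiteIntersections R 𝒬 ∧
      I ≤ Ideal.comap (Ideal.Quotient.mk I) J ∧
      Ideal.map (Ideal.Quotient.mk I) (Ideal.comap (Ideal.Quotient.mk I) J) = J := by
  classical
  obtain ⟨α, hne, hsub, rfl⟩ := hJ
  refine ⟨⟨α.image (Ideal.comap (Ideal.Quotient.mk I)), hne.image _, ?_, ?_⟩, ?_, ?_⟩
  · intro Q hQ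
    simp only [Finset.coe_image, Set.mem_image, Finset.mem_coe] at hQ
    obtain ⟨J, hJα, rfl⟩ := hQ
    obtain ⟨Q', ⟨hQ'𝒬, hIQ'⟩, rfl⟩ := hsub hJα
    rwa [comap_map_mk_aux I hIQ']
  · rw [Finset.inf_image, comap_finset_inf_aux]
    rfl
  · intro x hx
    simp only [Ideal.mem_comap, Ideal.Quotient.eq_zero_iff_mem.mpr hx]
    exact Submodule.zero_mem _
  · exact Ideal.map_comap_of_surjective _ Ideal.Quotient.mk_surjective _

end Aux

/-- Intersection compatibility is preserved by passing to the quotient by any ideal of an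
excellent local ring. -/
theorem isIntersectionCompatible_map_quotient (R : Type u) [CommRing R] [IsLocalRing R]
    (hexc : IsExcellentRing R) (𝒬 : Set (Ideal R)) (h𝒬 : IsPseudoPrimeSystem R 𝒬)
    (hcompat : IsIntersectionCompatible R 𝒬) (I : Ideal R) :
    IsIntersectionCompatible (R ⧸ I)
      ((fun Q : Ideal R => Q.map (Ideal.Quotient.mk I)) '' {Q ∈ 𝒬 | I ≤ Q}) := by
  classical
  intro J₁ hJ₁ J₂ hJ₂
  obtain ⟨hK₁, hI₁, hmc₁⟩ := finiteIntersections_comap_aux I 𝒬 hJ₁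
  obtain ⟨hK₂, hI₂, hmc₂⟩ := finiteIntersections_comap_aux I 𝒬 hJ₂
  obtain ⟨β, hβne, hβ𝒬, hβeq⟩ := hcompat _ hK₁ _ hK₂
  -- every member of β contains I
  have hIβ : ∀ Q ∈ β, I ≤ Q := by
    intro Q hQ
    calc I ≤ Ideal.comap (Ideal.Quotient.mk I) J₁ := hI₁
      _ ≤ Ideal.comap (Ideal.Quotient.mk I) J₁ + Ideal.comap (Ideal.Quotient.mk I) J₂ :=
        le_sup_left
      _ = β.inf id := hβeq
      _ ≤ Q := Finset.inf_le hQ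
  -- J₁ + J₂ is the image of the intersection of β
  have hsum : J₁ + J₂ = Ideal.map (Ideal.Quotient.mk I) (β.inf id) := by
    rw [← hβeq, Submodule.add_eq_sup, Submodule.add_eq_sup, Ideal.map_sup, hmc₁, hmc₂]
  -- map commutes with this intersection since all members contain I
  have hmapinf : Ideal.map (Ideal.Quotient.mk I) (β.inf id) =
      β.inf (fun Q => Ideal.map (Ideal.Quotient.mk I) Q) := by
    apply Ideal.comap_injective_of_surjective _ Ideal.Quotient.mk_surjective
    rw [comap_map_mk_aux I (by rw [← hβeq]; exact le_trans hI₁ le_sup_left),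
      comap_finset_inf_aux I β (fun Q => Ideal.map (Ideal.Quotient.mk I) Q)]
    refine (Finset.inf_congr rfl ?_).symm
    intro Q hQ
    exact comap_map_mk_aux I (hIβ Q hQ)
  refine ⟨β.image (fun Q => Ideal.map (Ideal.Quotient.mk I) Q), hβne.image _, ?_, ?_⟩
  · intro J hJ
    simp only [Finset.coe_image, Set.mem_image, Finset.mem_coe] at hJ
    obtain ⟨Q, hQβ, rfl⟩ := hJ
    exact ⟨Q, ⟨hβ𝒬 hQβ, hIβ Q hQβ⟩, rfl⟩
  · rw [Finset.inf_image, hsum, hmapinf]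
    rfl
end

section
/- Let 𝒬 be an intersection compatible pseudo-prime system in an excellent local ring (R, m, k), and let φ : S → R be a surjective homomorphism of Noetherian local rings. Then the pseudo-prime system φ^{-1}(𝒬) := { φ^{-1}(Q) : Q ∈ 𝒬 } in S is again intersection compatible. -/
open IsLocalRing TensorProduct

universe u

section Aux
universe v
variable {S' R' : Type v} [CommRing S'] [CommRing R'] 
lemma comap_finsetInf [DecidableEq (Ideal S')] (φ : S' →+* R') (α : Finset (Ideal R')) (hα : α.Nonempty) :
    Ideal.comap φ (α.inf id) = (α.image (fun I => I.comap φ)).inf id := by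
  classical
  induction hα using Finset.Nonempty.cons_induction with
  | singleton a => simp
  | cons a s ha hs ih => simp [Ideal.comap_inf, ih]

lemma comap_add_of_surj (φ : S' →+* R') (hφ : Function.Surjective φ) (I J : Ideal R') :
    Ideal.comap φ I + Ideal.comap φ J = Ideal.comap φ (I + J) := by
  apply le_antisymm
  · exact sup_le (Ideal.comap_mono le_sup_left) (Ideal.comap_mono le_sup_right)
  · intro x hx
    rw [Ideal.mem_comap] at hx
    obtain ⟨a, ha, b, hb, hab⟩ := Submodule.mem_sup.mp hx
    obtain ⟨s, rfl⟩ := hφ a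
    refine Submodule.mem_sup.mpr ⟨s, ha, x - s, ?_, by ring⟩
    rw [Ideal.mem_comap, map_sub, ← hab]
    simpa using hb

lemma finiteIntersections_comap (φ : S' →+* R') (𝒬 : Set (Ideal R')) :
    finiteIntersections S' ((fun Q : Ideal R' => Q.comap φ) '' 𝒬) =
      (fun Q : Ideal R' => Q.comap φ) '' finiteIntersections R' 𝒬 := by
  classical
  ext I
  constructor
  · rintro ⟨α, hne, hsub, rfl⟩
    -- pick preimages
    choose f hf1 hf2 using fun a (ha : a ∈ α) => hsub ha
    refine ⟨(α.attach.image fun a => f a.1 a.2).inf id, ⟨α.attach.image fun a => f a.1 a.2,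
      (Finset.image_nonempty.mpr (by simpa using hne)), ?_, rfl⟩, ?_⟩
    · intro x hx
      simp only [Finset.coe_image, Set.mem_image, Finset.mem_coe, Finset.mem_attach] at hx
      obtain ⟨a, -, rfl⟩ := hx
      exact hf1 a.1 a.2
    · show Ideal.comap φ _ = α.inf id
      rw [comap_finsetInf φ _ (Finset.image_nonempty.mpr (by simpa using hne))]
      congr 1
      rw [Finset.image_image]
      ext J
      simp only [Finset.mem_image, Finset.mem_attach, true_and, Subtype.exists]
      constructor
      · rintro ⟨a, ha, rfl⟩
        show Ideal.comap φ (f a ha) ∈ α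
        rw [show Ideal.comap φ (f a ha) = a from hf2 a ha]
        exact ha
      · intro hJ; exact ⟨J, hJ, hf2 J hJ⟩
  · rintro ⟨K, ⟨α, hne, hsub, rfl⟩, rfl⟩
    refine ⟨α.image fun Q => Q.comap φ, Finset.image_nonempty.mpr hne, ?_,
      comap_finsetInf φ α hne⟩
    intro x hx
    simp only [Finset.coe_image, Set.mem_image, Finset.mem_coe] at hx
    obtain ⟨a, ha, rfl⟩ := hx
    exact ⟨a, hsub ha, rfl⟩

end Aux

/-- Intersection compatibility is preserved by pulling back along a surjection of Noetherian
local rings. -/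
theorem isIntersectionCompatible_comap_surjective (R : Type u) [CommRing R] [IsLocalRing R]
    (hexc : IsExcellentRing R) (𝒬 : Set (Ideal R)) (h𝒬 : IsPseudoPrimeSystem R 𝒬)
    (hcompat : IsIntersectionCompatible R 𝒬) (S : Type u) [CommRing S] [IsNoetherianRing S]
    [IsLocalRing S] (φ : S →+* R) (hφ : Function.Surjective φ) :
    IsIntersectionCompatible S ((fun Q : Ideal R => Q.comap φ) '' 𝒬) := by
  intro I hI J hJ
  rw [finiteIntersections_comap] at hI hJ ⊢
  obtain ⟨I₀, hI₀, rfl⟩ := hI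
  obtain ⟨J₀, hJ₀, rfl⟩ := hJ
  exact ⟨I₀ + J₀, hcompat I₀ hI₀ J₀ hJ₀, (comap_add_of_surj φ hφ I₀ J₀).symm⟩
end
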